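/- (Levine-type blow-up lemma) Let H : [0,∞) → ℝ be positive and twice differentiable with H''(t)H(t) − (1+ν)(H'(t))² ≥ 0 for all t ≥ 0, where ν > 0. If H(0) > 0 and H'(0) > 0, then there exists t₁ ≤ H(0)/(ν H'(0)) such that H(t) → ∞ as t → t₁⁻ (equivalently, H cannot be extended as a finite twice-differentiable function on [0, H(0)/(νH'(0))]). -/

import Mathlib

open Set

theorem levine_blow_up (ν T : ℝ) (hν : 0 < ν) (hT : 0 < T) (H : ℝ → ℝ)
    (hpos : ∀ t ∈ Ico (0 : ℝ) T, 0 < H t)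
    (hd1 : ∀ t ∈ Ico (0 : ℝ) T, DifferentiableAt ℝ H t)
    (hd2 : ∀ t ∈ Ico (0 : ℝ) T, DifferentiableAt ℝ (deriv H) t)
    (hineq : ∀ t ∈ Ico (0 : ℝ) T,
      0 ≤ deriv (deriv H) t * H t - (1 + ν) * (deriv H t) ^ 2)
    (h0 : 0 < H 0) (h0' : 0 < deriv H 0) :
    T ≤ H 0 / (ν * deriv H 0) := by
  by_contra hcon
  push_neg at hcon
  set t₁ : ℝ := H 0 / (ν * deriv H 0) with ht₁
  have ht₁pos : 0 < t₁ := div_pos h0 (mul_pos hν h0')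
  have ht₁mem : t₁ ∈ Ico (0:ℝ) T := ⟨le_of_lt ht₁pos, hcon⟩
  have h0mem : (0:ℝ) ∈ Ico (0:ℝ) T := ⟨le_refl 0, hT⟩
  set F : ℝ → ℝ := fun t => H t ^ (-ν) with hF
  set G : ℝ → ℝ := fun t => deriv H t * (-ν) * H t ^ (-ν - 1) with hG
  have hFd : ∀ t ∈ Ico (0:ℝ) T, HasDerivAt F (G t) t := by
    intro t ht
    exact (hd1 t ht).hasDerivAt.rpow_const (Or.inl (hpos t ht).ne')
  have hGd : ∀ t ∈ Ico (0:ℝ) T, HasDerivAt G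
      (deriv (deriv H) t * (-ν) * H t ^ (-ν - 1)
        + deriv H t * (-ν) * (deriv H t * (-ν - 1) * H t ^ (-ν - 1 - 1))) t := by
    intro t ht
    have h1 : HasDerivAt (fun t => deriv H t * (-ν)) (deriv (deriv H) t * (-ν)) t :=
      (hd2 t ht).hasDerivAt.mul_const _
    have h2 : HasDerivAt (fun t => H t ^ (-ν - 1))
        (deriv H t * (-ν - 1) * H t ^ (-ν - 1 - 1)) t :=
      (hd1 t ht).hasDerivAt.rpow_const (Or.inl (hpos t ht).ne')
    have := h1.mul h2
    exact this
  have hGanti : AntitoneOn G (Ico 0 T) := by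
    apply antitoneOn_of_deriv_nonpos (convex_Ico 0 T)
    · intro t ht
      exact (hGd t ht).differentiableAt.continuousAt.continuousWithinAt
    · intro t ht
      rw [interior_Ico] at ht
      exact ((hGd t (Ioo_subset_Ico_self ht)).differentiableAt).differentiableWithinAt
    · intro t ht
      rw [interior_Ico] at ht
      have ht' : t ∈ Ico (0:ℝ) T := Ioo_subset_Ico_self ht
      rw [(hGd t ht').deriv]
      have hH := hpos t ht'
      have hkey := hineq t ht'
      have hp : (0:ℝ) < H t ^ (-ν - 1 - 1) := Real.rpow_pos_of_pos hH _
      have hsplit : H t ^ (-ν - 1) = H t * H t ^ (-ν - 1 - 1) := by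
        have he : (-ν - 1) = 1 + (-ν - 1 - 1) := by ring
        conv_lhs => rw [he, Real.rpow_add hH, Real.rpow_one]
      rw [hsplit]
      have hprod : 0 ≤ ν * (H t ^ (-ν - 1 - 1)) *
          (deriv (deriv H) t * H t - (1 + ν) * (deriv H t) ^ 2) :=
        mul_nonneg (mul_nonneg hν.le hp.le) hkey
      nlinarith [hprod]
  obtain ⟨c, hc, hceq⟩ := exists_hasDerivAt_eq_slope F G ht₁pos
    (fun x hx => (hFd x ⟨hx.1, lt_of_le_of_lt hx.2 hcon⟩).continuousAt.continuousWithinAt)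
    (fun x hx => hFd x ⟨hx.1.le, hx.2.trans hcon⟩)
  have hcmem : c ∈ Ico (0:ℝ) T := ⟨hc.1.le, hc.2.trans hcon⟩
  have hGc : G c ≤ G 0 := hGanti h0mem hcmem hc.1.le
  have hFt : F t₁ = F 0 + t₁ * G c := by
    rw [sub_zero, eq_div_iff ht₁pos.ne'] at hceq
    linarith [hceq]
  have hFpos : 0 < F t₁ := Real.rpow_pos_of_pos (hpos t₁ ht₁mem) _
  have hF0 : F 0 = H 0 ^ (-ν) := rfl
  have hG0 : G 0 = deriv H 0 * (-ν) * H 0 ^ (-ν - 1) := rfl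
  have hsplit0 : H 0 ^ (-ν) = H 0 * H 0 ^ (-ν - 1) := by
    have he : (-ν) = 1 + (-ν - 1) := by ring
    conv_lhs => rw [he, Real.rpow_add h0, Real.rpow_one]
  have hzero : F 0 + t₁ * G 0 = 0 := by
    rw [hF0, hG0, hsplit0, ht₁]
    field_simp
    ring
  have ht₁Gc : t₁ * G c ≤ t₁ * G 0 := by
    exact mul_le_mul_of_nonneg_left hGc ht₁pos.le
  linarith
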